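/- For 0 < M < 1/2 and n ∈ ℕ ∪ {0}, the pair Φ⁽¹⁾(ρ) = (cos ρ)^{−M} (1 − sin ρ)^{1/2} P_n^{(1/2 − M, −1/2 − M)}(sin ρ), Φ⁽²⁾(ρ) = −(cos ρ)^{−M} (1 + sin ρ)^{1/2} P_n^{(−1/2 − M, 1/2 − M)}(sin ρ) satisfies the spatial Dirac system dΦ⁽¹⁾/dρ + M sec ρ Φ⁽¹⁾ = ω Φ⁽²⁾ and −dΦ⁽²⁾/dρ + M sec ρ Φ⁽²⁾ = ω Φ⁽¹⁾ with ω = n − M + 1/2, on (−π/2, π/2). -/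

import Mathlib

open Real Set

/-- Pochhammer symbol (x)_k = x(x+1)⋯(x+k−1). -/
noncomputable def poch (x : ℝ) (k : ℕ) : ℝ := ∏ i ∈ Finset.range k, (x + i)

/-- Jacobi polynomial P_n^{(a,b)}(x). -/
noncomputable def jacobiP (n : ℕ) (a b : ℝ) (x : ℝ) : ℝ :=
  (Real.Gamma (n + a + 1) / (n.factorial * Real.Gamma (a + 1))) *
    ∑ k ∈ Finset.range (n + 1),
      (poch (n + a + b + 1) k * poch (-(n : ℝ)) k / (poch (a + 1) k * k.factorial)) *
        ((1 - x) / 2) ^ k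

/-- First component of the Dirichlet type II mode. -/
noncomputable def PhiII1 (M : ℝ) (n : ℕ) (ρ : ℝ) : ℝ :=
  Real.cos ρ ^ (-M) * Real.sqrt (1 - Real.sin ρ) * jacobiP n (1/2 - M) (-(1/2) - M) (Real.sin ρ)

/-- Second component of the Dirichlet type II mode. -/
noncomputable def PhiII2 (M : ℝ) (n : ℕ) (ρ : ℝ) : ℝ :=
  -(Real.cos ρ ^ (-M) * Real.sqrt (1 + Real.sin ρ) * jacobiP n (-(1/2) - M) (1/2 - M) (Real.sin ρ))


lemma poch_zero (x : ℝ) : poch x 0 = 1 := by simp [poch]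

lemma poch_succ (x : ℝ) (k : ℕ) : poch x (k+1) = poch x k * (x + k) := by
  simp [poch, Finset.prod_range_succ]

lemma poch_succ' (x : ℝ) (k : ℕ) : poch x (k+1) = x * poch (x+1) k := by
  rw [poch, Finset.prod_range_succ']
  rw [mul_comm]
  congr 1
  · push_cast; ring_nf
  · apply Finset.prod_congr rfl
    intros i _
    push_cast; ring

lemma poch_pos {x : ℝ} (hx : 0 < x) (k : ℕ) : 0 < poch x k := by
  apply Finset.prod_pos; intro i _; positivity

lemma poch_shift (x : ℝ) (k : ℕ) : poch x k * (x + k) = x * poch (x+1) k := by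
  rw [← poch_succ, poch_succ']

lemma poch_neg_nat (n : ℕ) : poch (-(n:ℝ)) (n+1) = 0 := by
  apply Finset.prod_eq_zero (Finset.self_mem_range_succ n); simp

/-- derivative (in x) of the Jacobi polynomial -/
noncomputable def jacobiD (n : ℕ) (a b : ℝ) (x : ℝ) : ℝ :=
  (Real.Gamma (n + a + 1) / (n.factorial * Real.Gamma (a + 1))) *
    ∑ k ∈ Finset.range (n + 1),
      (poch (n + a + b + 1) k * poch (-(n : ℝ)) k / (poch (a + 1) k * k.factorial)) *
        ((k : ℝ) * ((1 - x) / 2) ^ (k - 1) * (-(1/2)))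

lemma jacobiP_hasDerivAt (n : ℕ) (a b x : ℝ) :
    HasDerivAt (fun y => jacobiP n a b y) (jacobiD n a b x) x := by
  unfold jacobiP jacobiD
  apply HasDerivAt.const_mul
  apply HasDerivAt.fun_sum
  intro k _
  apply HasDerivAt.const_mul
  have h : HasDerivAt (fun y : ℝ => (1 - y)/2) (-(1/2)) x := by
    exact (((hasDerivAt_id' x).const_sub 1).div_const 2).congr_deriv (by norm_num)
  simpa using h.fun_pow k

lemma idA (b : ℝ) (hb : 0 < b + 1) (n : ℕ) (x : ℝ) :
    (1 - x) * jacobiD n (b+1) b x - (b+1) * jacobiP n (b+1) b x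
      = -((n:ℝ) + b + 1) * jacobiP n b (b+1) x := by
  have hg1 : Real.Gamma ((n:ℝ) + (b+1) + 1) = ((n:ℝ) + b + 1) * Real.Gamma ((n:ℝ) + b + 1) := by
    have e : (n:ℝ) + (b+1) + 1 = ((n:ℝ) + b + 1) + 1 := by ring
    have hpos : (0:ℝ) < (n:ℝ) + b + 1 := by have := n.cast_nonneg (α := ℝ); linarith
    rw [e, Real.Gamma_add_one hpos.ne']
  have hg2 : Real.Gamma ((b+1) + 1) = (b+1) * Real.Gamma (b+1) := by
    rw [Real.Gamma_add_one hb.ne']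
  have e2 : (n:ℝ) + (b+1) + b + 1 = (n:ℝ) + b + (b+1) + 1 := by ring
  unfold jacobiP jacobiD
  rw [hg1, hg2, e2]
  simp only [Finset.mul_sum]
  rw [← Finset.sum_sub_distrib]
  refine Finset.sum_congr rfl fun k hk => ?_
  have hpk : poch ((b+1) + 1) k = poch (b+1) k * (b+1+(k:ℝ)) / (b+1) := by
    rw [eq_div_iff hb.ne', poch_shift]; ring
  rw [hpk]
  have hΓ1 : Real.Gamma (b+1) ≠ 0 := (Real.Gamma_pos_of_pos hb).ne'
  have hP1 : poch (b+1) k ≠ 0 := (poch_pos hb k).ne'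
  have hn! : (n.factorial : ℝ) ≠ 0 := by positivity
  have hk! : (k.factorial : ℝ) ≠ 0 := by positivity
  rcases k with _ | j
  · simp [poch_zero]
    field_simp
    ring
  · have hbk : b + 1 + ((j:ℝ)+1) ≠ 0 := by positivity
    simp only [Nat.add_sub_cancel]
    push_cast
    field_simp
    ring

noncomputable def jC (n : ℕ) (a : ℝ) : ℝ :=
  Real.Gamma ((n:ℝ) + a + 1) / (n.factorial * Real.Gamma (a + 1))

noncomputable def jT (n : ℕ) (a b : ℝ) (k : ℕ) : ℝ :=
  poch ((n:ℝ) + a + b + 1) k * poch (-(n : ℝ)) k / (poch (a + 1) k * k.factorial)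

lemma jacobiP_def (n : ℕ) (a b x : ℝ) :
    jacobiP n a b x = jC n a * ∑ k ∈ Finset.range (n+1), jT n a b k * ((1-x)/2)^k := rfl

lemma jacobiD_def (n : ℕ) (a b x : ℝ) :
    jacobiD n a b x = jC n a * ∑ k ∈ Finset.range (n+1),
      jT n a b k * ((k:ℝ) * ((1-x)/2)^(k-1) * (-(1/2))) := rfl

lemma idB (b : ℝ) (hb : 0 < b + 1) (n : ℕ) (x : ℝ) :
    (1 + x) * jacobiD n b (b+1) x + (b+1) * jacobiP n b (b+1) x
      = ((n:ℝ) + b + 1) * jacobiP n (b+1) b x := by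
  have hg1 : Real.Gamma ((n:ℝ) + (b+1) + 1) = ((n:ℝ) + b + 1) * Real.Gamma ((n:ℝ) + b + 1) := by
    have e : (n:ℝ) + (b+1) + 1 = ((n:ℝ) + b + 1) + 1 := by ring
    have hpos : (0:ℝ) < (n:ℝ) + b + 1 := by have := n.cast_nonneg (α := ℝ); linarith
    rw [e, Real.Gamma_add_one hpos.ne']
  have hg2 : Real.Gamma ((b+1) + 1) = (b+1) * Real.Gamma (b+1) := by
    rw [Real.Gamma_add_one hb.ne']
  have e2 : (n:ℝ) + (b+1) + b + 1 = (n:ℝ) + b + (b+1) + 1 := by ring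
  rw [jacobiP_def, jacobiP_def, jacobiD_def]
  rw [mul_left_comm (1+x) (jC n b), mul_left_comm (b+1) (jC n b), ← mul_add,
    Finset.mul_sum, Finset.mul_sum, ← Finset.sum_add_distrib]
  have hsplit : ∀ k ∈ Finset.range (n+1),
      (1+x)*(jT n b (b+1) k * ((k:ℝ)*((1-x)/2)^(k-1)*(-(1/2)))) + (b+1)*(jT n b (b+1) k * ((1-x)/2)^k)
      = (jT n b (b+1) k * (-(k:ℝ)) * ((1-x)/2)^(k-1)) + (jT n b (b+1) k * ((k:ℝ) + b + 1) * ((1-x)/2)^k) := by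
    intro k _
    rcases k with _ | j
    · simp; ring
    · have h1x : ((1:ℝ)+x) = 2 - 2*((1-x)/2) := by ring
      rw [h1x]
      simp only [Nat.add_sub_cancel]
      rw [pow_succ]
      push_cast
      ring
  rw [Finset.sum_congr rfl hsplit, Finset.sum_add_distrib]
  have hre : ∑ k ∈ Finset.range (n+1), jT n b (b+1) k * (-(k:ℝ)) * ((1-x)/2)^(k-1)
      = ∑ k ∈ Finset.range (n+1), jT n b (b+1) (k+1) * (-((k:ℝ)+1)) * ((1-x)/2)^k := by
    rw [Finset.sum_range_succ' (fun k => jT n b (b+1) k * (-(k:ℝ)) * ((1-x)/2)^(k-1)) n]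
    rw [Finset.sum_range_succ (fun k => jT n b (b+1) (k+1) * (-((k:ℝ)+1)) * ((1-x)/2)^k) n]
    have hzero : jT n b (b+1) (n+1) = 0 := by
      unfold jT; rw [poch_neg_nat]; simp
    simp only [hzero, Nat.cast_zero, neg_zero, mul_zero, zero_mul, add_zero]
    apply Finset.sum_congr rfl
    intro i _
    simp only [Nat.add_sub_cancel]
    push_cast; ring
  rw [hre, ← Finset.sum_add_distrib]
  rw [mul_left_comm ((n:ℝ)+b+1) (jC n (b+1)), Finset.mul_sum, Finset.mul_sum, Finset.mul_sum]
  refine Finset.sum_congr rfl fun k hk => ?_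
  have hpk : poch ((b+1) + 1) k = poch (b+1) k * (b+1+(k:ℝ)) / (b+1) := by
    rw [eq_div_iff hb.ne', poch_shift]; ring
  have hΓ1 : Real.Gamma (b+1) ≠ 0 := (Real.Gamma_pos_of_pos hb).ne'
  have hP1 : poch (b+1) k ≠ 0 := (poch_pos hb k).ne'
  have hn! : (n.factorial : ℝ) ≠ 0 := by positivity
  have hk! : (k.factorial : ℝ) ≠ 0 := by positivity
  have hbk : b + 1 + (k:ℝ) ≠ 0 := by positivity
  unfold jC jT
  rw [hg1, hg2, e2, hpk, poch_succ, poch_succ, poch_succ]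
  push_cast [Nat.factorial_succ]
  field_simp
  ring

set_option maxHeartbeats 1000000 in
/-- For 0 < M < 1/2, the Dirichlet type II mode pair satisfies the spatial Dirac
system with ω = n − M + 1/2 on (−π/2, π/2). -/
theorem stmt15 (M : ℝ) (hM : 0 < M) (hM' : M < 1/2) (n : ℕ) :
    (∀ ρ ∈ Ioo (-(π/2)) (π/2),
      deriv (PhiII1 M n) ρ + M * (Real.cos ρ)⁻¹ * PhiII1 M n ρ
        = ((n : ℝ) - M + 1/2) * PhiII2 M n ρ) ∧
    (∀ ρ ∈ Ioo (-(π/2)) (π/2),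
      -deriv (PhiII2 M n) ρ + M * (Real.cos ρ)⁻¹ * PhiII2 M n ρ
        = ((n : ℝ) - M + 1/2) * PhiII1 M n ρ) := by
  have hb : (0:ℝ) < (-(1/2) - M) + 1 := by linarith
  have eb : (-(1/2 : ℝ) - M) + 1 = 1/2 - M := by ring
  constructor
  · intro ρ hρ
    have hc : 0 < Real.cos ρ := Real.cos_pos_of_mem_Ioo hρ
    have hs1 : Real.sin ρ < 1 := by nlinarith [Real.sin_sq_add_cos_sq ρ, Real.neg_one_le_sin ρ]
    have hs2 : -1 < Real.sin ρ := by nlinarith [Real.sin_sq_add_cos_sq ρ, Real.sin_le_one ρ]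
    have h1 : HasDerivAt (fun t => Real.cos t ^ (-M)) (-Real.sin ρ * (-M) * Real.cos ρ ^ (-M - 1)) ρ :=
      (Real.hasDerivAt_cos ρ).rpow_const (Or.inl hc.ne')
    have h2 : HasDerivAt (fun t => Real.sqrt (1 - Real.sin t)) (-Real.cos ρ / (2 * Real.sqrt (1 - Real.sin ρ))) ρ :=
      ((Real.hasDerivAt_sin ρ).const_sub 1).sqrt (by linarith : (1 - Real.sin ρ) ≠ 0)
    have h3 : HasDerivAt (fun t => jacobiP n (1/2 - M) (-(1/2) - M) (Real.sin t))
        (jacobiD n (1/2 - M) (-(1/2) - M) (Real.sin ρ) * Real.cos ρ) ρ :=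
      (jacobiP_hasDerivAt n (1/2 - M) (-(1/2) - M) (Real.sin ρ)).comp ρ (Real.hasDerivAt_sin ρ)
    have hD : HasDerivAt (PhiII1 M n)
        ((-Real.sin ρ * (-M) * Real.cos ρ ^ (-M - 1) * Real.sqrt (1 - Real.sin ρ)
          + Real.cos ρ ^ (-M) * (-Real.cos ρ / (2 * Real.sqrt (1 - Real.sin ρ))))
          * jacobiP n (1/2 - M) (-(1/2) - M) (Real.sin ρ)
        + (Real.cos ρ ^ (-M) * Real.sqrt (1 - Real.sin ρ))
          * (jacobiD n (1/2 - M) (-(1/2) - M) (Real.sin ρ) * Real.cos ρ)) ρ :=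
      (h1.mul h2).mul h3
    rw [hD.deriv]
    have hA := idA (-(1/2) - M) hb n (Real.sin ρ)
    rw [eb] at hA
    have hm0 : 0 < Real.sqrt (1 - Real.sin ρ) := Real.sqrt_pos.mpr (by linarith)
    have hp0 : 0 < Real.sqrt (1 + Real.sin ρ) := Real.sqrt_pos.mpr (by linarith)
    have hm2 : Real.sqrt (1 - Real.sin ρ) ^ 2 = 1 - Real.sin ρ := Real.sq_sqrt (by linarith)
    have hp2 : Real.sqrt (1 + Real.sin ρ) ^ 2 = 1 + Real.sin ρ := Real.sq_sqrt (by linarith)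
    have hmp : Real.sqrt (1 - Real.sin ρ) * Real.sqrt (1 + Real.sin ρ) = Real.cos ρ := by
      rw [← Real.sqrt_mul (by linarith)]
      rw [show (1 - Real.sin ρ) * (1 + Real.sin ρ) = Real.cos ρ ^ 2 by nlinarith [Real.sin_sq_add_cos_sq ρ]]
      exact Real.sqrt_sq hc.le
    have hcm : Real.cos ρ ^ (-M - 1) * Real.cos ρ = Real.cos ρ ^ (-M) := by
      rw [← Real.rpow_add_one hc.ne' (-M - 1)]
      congr 1; ring
    simp only [PhiII1, PhiII2]
    set s := Real.sin ρ with hs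
    set c := Real.cos ρ with hcdef
    set m := Real.sqrt (1 - s) with hm
    set p := Real.sqrt (1 + s) with hp
    set A := c ^ (-M) with hA0
    set A1 := c ^ (-M - 1) with hA1
    set P := jacobiP n (1/2 - M) (-(1/2) - M) s with hP
    set DP := jacobiD n (1/2 - M) (-(1/2) - M) s with hDP
    set Q := jacobiP n (-(1/2) - M) (1/2 - M) s with hQ
    rw [← hmp] at hcm ⊢
    field_simp
    linear_combination (2*s*M*P)*hcm + (2*A*DP*p^2)*hm2
      + (2*A*DP*(1-s) - A*P + A*(2*((n:ℝ)-M)+1)*Q)*hp2 + (2*A*(1+s))*hA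
  · intro ρ hρ
    have hc : 0 < Real.cos ρ := Real.cos_pos_of_mem_Ioo hρ
    have hs1 : Real.sin ρ < 1 := by nlinarith [Real.sin_sq_add_cos_sq ρ, Real.neg_one_le_sin ρ]
    have hs2 : -1 < Real.sin ρ := by nlinarith [Real.sin_sq_add_cos_sq ρ, Real.sin_le_one ρ]
    have h1 : HasDerivAt (fun t => Real.cos t ^ (-M)) (-Real.sin ρ * -M * Real.cos ρ ^ (-M - 1)) ρ :=
      (Real.hasDerivAt_cos ρ).rpow_const (Or.inl hc.ne')
    have h2 : HasDerivAt (fun t => Real.sqrt (1 + Real.sin t)) (Real.cos ρ / (2 * Real.sqrt (1 + Real.sin ρ))) ρ :=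
      ((Real.hasDerivAt_sin ρ).const_add 1).sqrt (by linarith : (1 + Real.sin ρ) ≠ 0)
    have h3 : HasDerivAt (fun t => jacobiP n (-(1/2) - M) (1/2 - M) (Real.sin t))
        (jacobiD n (-(1/2) - M) (1/2 - M) (Real.sin ρ) * Real.cos ρ) ρ :=
      (jacobiP_hasDerivAt n (-(1/2) - M) (1/2 - M) (Real.sin ρ)).comp ρ (Real.hasDerivAt_sin ρ)
    have hD : HasDerivAt (PhiII2 M n)
        (-((-Real.sin ρ * -M * Real.cos ρ ^ (-M - 1) * Real.sqrt (1 + Real.sin ρ)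
          + Real.cos ρ ^ (-M) * (Real.cos ρ / (2 * Real.sqrt (1 + Real.sin ρ))))
          * jacobiP n (-(1/2) - M) (1/2 - M) (Real.sin ρ)
        + (Real.cos ρ ^ (-M) * Real.sqrt (1 + Real.sin ρ))
          * (jacobiD n (-(1/2) - M) (1/2 - M) (Real.sin ρ) * Real.cos ρ))) ρ :=
      ((h1.mul h2).mul h3).neg
    rw [hD.deriv]
    have hB := idB (-(1/2) - M) hb n (Real.sin ρ)
    rw [eb] at hB
    have hm0 : 0 < Real.sqrt (1 - Real.sin ρ) := Real.sqrt_pos.mpr (by linarith)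
    have hp0 : 0 < Real.sqrt (1 + Real.sin ρ) := Real.sqrt_pos.mpr (by linarith)
    have hm2 : Real.sqrt (1 - Real.sin ρ) ^ 2 = 1 - Real.sin ρ := Real.sq_sqrt (by linarith)
    have hp2 : Real.sqrt (1 + Real.sin ρ) ^ 2 = 1 + Real.sin ρ := Real.sq_sqrt (by linarith)
    have hmp : Real.sqrt (1 - Real.sin ρ) * Real.sqrt (1 + Real.sin ρ) = Real.cos ρ := by
      rw [← Real.sqrt_mul (by linarith)]
      rw [show (1 - Real.sin ρ) * (1 + Real.sin ρ) = Real.cos ρ ^ 2 by nlinarith [Real.sin_sq_add_cos_sq ρ]]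
      exact Real.sqrt_sq hc.le
    have hcm : Real.cos ρ ^ (-M - 1) * Real.cos ρ = Real.cos ρ ^ (-M) := by
      rw [← Real.rpow_add_one hc.ne' (-M - 1)]
      congr 1; ring
    simp only [PhiII1, PhiII2]
    set s := Real.sin ρ with hs
    set c := Real.cos ρ with hcdef
    set m := Real.sqrt (1 - s) with hm
    set p := Real.sqrt (1 + s) with hp
    set A := c ^ (-M) with hA0
    set A1 := c ^ (-M - 1) with hA1
    set P := jacobiP n (1/2 - M) (-(1/2) - M) s with hP
    set DQ := jacobiD n (-(1/2) - M) (1/2 - M) s with hDQ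
    set Q := jacobiP n (-(1/2) - M) (1/2 - M) s with hQ
    rw [← hmp] at hcm ⊢
    clear hD h1 h2 h3 hρ
    field_simp
    linear_combination (2*s*M*Q)*hcm + (A*Q + 2*A*DQ*p^2 - A*(2*((n:ℝ)-M)+1)*P)*hm2
      + (2*A*DQ*(1-s))*hp2 + (2*A*(1-s))*hB
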